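/- Let 1/2 < α < 1 and let w ∈ ℝ with w ≠ 0. With CE(w, b) = −(1/2)·(∫_{−1}^{0} log(exp(w·x + b)/(exp(w·x + b) + 1)) dx + ∫_{0}^{α} log(1/(exp(w·x + b) + 1)) dx + ∫_{α}^{1} log(exp(w·x + b)/(exp(w·x + b) + 1)) dx), the function b ↦ CE(w, b) does not have a local minimum at b = 0. Consequently, the expected cross-entropy has no minimizer whose induced classification threshold −b/w equals 0. -/

import Mathlib

open Real intervalIntegral

noncomputable def ffCE (w t : ℝ) : ℝ := Real.log (Real.exp (w*t) / (Real.exp (w*t) + 1))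
noncomputable def ggCE (w t : ℝ) : ℝ := Real.log (1 / (Real.exp (w*t) + 1))

lemma ffCE_cont (w : ℝ) : Continuous (ffCE w) := by
  apply Continuous.log
  · exact (Real.continuous_exp.comp (continuous_const.mul continuous_id)).div
      ((Real.continuous_exp.comp (continuous_const.mul continuous_id)).add continuous_const)
      (fun x => by positivity)
  · intro x; positivity

lemma ggCE_cont (w : ℝ) : Continuous (ggCE w) := by
  apply Continuous.log
  · exact continuous_const.div
      ((Real.continuous_exp.comp (continuous_const.mul continuous_id)).add continuous_const)
      (fun x => by positivity)
  · intro x; positivity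

noncomputable def FCE (w x : ℝ) : ℝ := ∫ t in (0:ℝ)..x, ffCE w t
noncomputable def GCE (w x : ℝ) : ℝ := ∫ t in (0:ℝ)..x, ggCE w t

lemma FCE_deriv (w x : ℝ) : HasDerivAt (FCE w) (ffCE w x) x :=
  intervalIntegral.integral_hasDerivAt_right ((ffCE_cont w).intervalIntegrable 0 x)
    ((ffCE_cont w).stronglyMeasurable.stronglyMeasurableAtFilter)
    (ffCE_cont w).continuousAt

lemma GCE_deriv (w x : ℝ) : HasDerivAt (GCE w) (ggCE w x) x :=
  intervalIntegral.integral_hasDerivAt_right ((ggCE_cont w).intervalIntegrable 0 x)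
    ((ggCE_cont w).stronglyMeasurable.stronglyMeasurableAtFilter)
    (ggCE_cont w).continuousAt

lemma FCE_sub (w a b : ℝ) : (∫ t in a..b, ffCE w t) = FCE w b - FCE w a := by
  rw [FCE, FCE, intervalIntegral.integral_interval_sub_left
    ((ffCE_cont w).intervalIntegrable 0 b) ((ffCE_cont w).intervalIntegrable 0 a)]

lemma GCE_sub (w a b : ℝ) : (∫ t in a..b, ggCE w t) = GCE w b - GCE w a := by
  rw [GCE, GCE, intervalIntegral.integral_interval_sub_left
    ((ggCE_cont w).intervalIntegrable 0 b) ((ggCE_cont w).intervalIntegrable 0 a)]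

noncomputable def CE (α w b : ℝ) : ℝ :=
  -(1 / 2) *
    ((∫ x in (-1 : ℝ)..0,
        Real.log (Real.exp (w * x + b) / (Real.exp (w * x + b) + 1)))
      + (∫ x in (0 : ℝ)..α, Real.log (1 / (Real.exp (w * x + b) + 1)))
      + (∫ x in α..(1 : ℝ),
          Real.log (Real.exp (w * x + b) / (Real.exp (w * x + b) + 1))))

lemma CE_eq (α w : ℝ) (hw : w ≠ 0) (b : ℝ) :
    CE α w b = -(1/2) * ((FCE w (0 + b/w) - FCE w (-1 + b/w))
      + (GCE w (α + b/w) - GCE w (0 + b/w))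
      + (FCE w (1 + b/w) - FCE w (α + b/w))) := by
  have key : ∀ x : ℝ, w * (x + b/w) = w * x + b := by intro x; field_simp
  have h1 : (∫ x in (-1:ℝ)..0,
      Real.log (Real.exp (w * x + b) / (Real.exp (w * x + b) + 1)))
      = FCE w (0 + b/w) - FCE w (-1 + b/w) := by
    rw [show (fun x => Real.log (Real.exp (w * x + b) / (Real.exp (w * x + b) + 1)))
        = fun x => ffCE w (x + b/w) from funext fun x => by rw [ffCE, key],
      intervalIntegral.integral_comp_add_right (ffCE w) (b/w), FCE_sub]
  have h2 : (∫ x in (0:ℝ)..α, Real.log (1 / (Real.exp (w * x + b) + 1)))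
      = GCE w (α + b/w) - GCE w (0 + b/w) := by
    rw [show (fun x => Real.log (1 / (Real.exp (w * x + b) + 1)))
        = fun x => ggCE w (x + b/w) from funext fun x => by rw [ggCE, key],
      intervalIntegral.integral_comp_add_right (ggCE w) (b/w), GCE_sub]
  have h3 : (∫ x in α..(1:ℝ),
      Real.log (Real.exp (w * x + b) / (Real.exp (w * x + b) + 1)))
      = FCE w (1 + b/w) - FCE w (α + b/w) := by
    rw [show (fun x => Real.log (Real.exp (w * x + b) / (Real.exp (w * x + b) + 1)))
        = fun x => ffCE w (x + b/w) from funext fun x => by rw [ffCE, key],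
      intervalIntegral.integral_comp_add_right (ffCE w) (b/w), FCE_sub]
  rw [CE]
  rw [h1, h2, h3]

lemma CE_hasDerivAt (α w : ℝ) (hw : w ≠ 0) :
    HasDerivAt (fun b : ℝ => CE α w b) ((α - 1) / 2) 0 := by
  have inner : ∀ c : ℝ, HasDerivAt (fun b : ℝ => c + b / w) (1/w) 0 := by
    intro c
    simpa using ((hasDerivAt_id (0:ℝ)).div_const w).const_add c
  have hF : ∀ c : ℝ, HasDerivAt (fun b : ℝ => FCE w (c + b / w)) (ffCE w c * (1/w)) 0 := by
    intro c
    have := (FCE_deriv w (c + 0 / w)).comp 0 (inner c)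
    simpa [Function.comp_def] using this
  have hG : ∀ c : ℝ, HasDerivAt (fun b : ℝ => GCE w (c + b / w)) (ggCE w c * (1/w)) 0 := by
    intro c
    have := (GCE_deriv w (c + 0 / w)).comp 0 (inner c)
    simpa [Function.comp_def] using this
  have hD : HasDerivAt (fun b : ℝ => -(1/2) * ((FCE w (0 + b/w) - FCE w (-1 + b/w))
      + (GCE w (α + b/w) - GCE w (0 + b/w))
      + (FCE w (1 + b/w) - FCE w (α + b/w))))
      (-(1/2) * ((ffCE w 0 * (1/w) - ffCE w (-1) * (1/w))
        + (ggCE w α * (1/w) - ggCE w 0 * (1/w))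
        + (ffCE w 1 * (1/w) - ffCE w α * (1/w)))) 0 :=
    ((((hF 0).sub (hF (-1))).add ((hG α).sub (hG 0))).add ((hF 1).sub (hF α))).const_mul _
  have heq : (fun b : ℝ => CE α w b) = fun b : ℝ =>
      -(1/2) * ((FCE w (0 + b/w) - FCE w (-1 + b/w))
      + (GCE w (α + b/w) - GCE w (0 + b/w))
      + (FCE w (1 + b/w) - FCE w (α + b/w))) := funext fun b => CE_eq α w hw b
  rw [heq]
  convert hD using 1
  -- derivative value computation
  have hpos : ∀ t : ℝ, (0:ℝ) < Real.exp (w*t) + 1 := fun t => by positivity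
  have ffval : ∀ t : ℝ, ffCE w t = w * t - Real.log (Real.exp (w*t) + 1) := by
    intro t
    rw [ffCE, Real.log_div (Real.exp_ne_zero _) (hpos t).ne', Real.log_exp]
  have ggval : ∀ t : ℝ, ggCE w t = -Real.log (Real.exp (w*t) + 1) := by
    intro t
    rw [ggCE, one_div, Real.log_inv]
  have hneg : Real.log (Real.exp (w*(-1)) + 1) = -w + Real.log (Real.exp (w*1) + 1) := by
    have : Real.exp (w*(-1)) + 1 = Real.exp (-w) * (Real.exp (w*1) + 1) := by
      rw [mul_add, ← Real.exp_add, mul_one]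
      ring_nf
      rw [Real.exp_zero]
      ring
    rw [this, Real.log_mul (Real.exp_ne_zero _) (hpos 1).ne', Real.log_exp]
  rw [ffval, ffval, ffval, ffval, ggval, ggval, hneg]
  field_simp
  ring

theorem CE_no_local_min_at_threshold_zero (α : ℝ) (hα₁ : 1 / 2 < α) (hα₂ : α < 1)
    (w : ℝ) (hw : w ≠ 0) :
    ¬ IsLocalMin (fun b : ℝ => CE α w b) 0 ∧
    ¬ ∃ b : ℝ, -b / w = 0 ∧ ∀ b' : ℝ, CE α w b ≤ CE α w b' := by
  have hder := CE_hasDerivAt α w hw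
  have hne : (α - 1) / 2 ≠ 0 := by
    intro h
    have : α = 1 := by linarith [(div_eq_zero_iff.mp h)]
    linarith
  have hmain : ¬ IsLocalMin (fun b : ℝ => CE α w b) 0 := by
    intro hmin
    have h0 := hmin.deriv_eq_zero
    rw [hder.deriv] at h0
    exact hne h0
  refine ⟨hmain, ?_⟩
  rintro ⟨b, hb, hminb⟩
  have hb0 : b = 0 := by
    have := div_eq_zero_iff.mp hb
    rcases this with h | h
    · linarith
    · exact absurd h hw
  subst hb0
  exact hmain (Filter.Eventually.of_forall fun b' => hminb b')
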